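/- Let k be a positive integer and run the peeling process on M_k, with iterates Q_0 = M_k, Q_{i+1} = peel(Q_i), and layers C_{i+1} = extremePoints ℝ (convexHull ℝ Q_i). Then every layer satisfies |C_i| ≤ 8. -/

import Mathlib

/-- Remove from `P` the extreme points (vertices) of its convex hull. -/
noncomputable def peel (P : Set (ℝ × ℝ)) : Set (ℝ × ℝ) :=
  P \ (convexHull ℝ P).extremePoints ℝ

/-- The set `M_k` of the `4k²` intersection points of the `4k` lines extending
the sides of the concentric squares `S_j = [−3^j/2, 3^j/2]²`, `1 ≤ j ≤ k`. -/
def Mset (k : ℕ) : Set (ℝ × ℝ) :=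
  {p | ∃ (ε δ : ℝ) (i j : ℕ), (ε = 1 ∨ ε = -1) ∧ (δ = 1 ∨ δ = -1) ∧
    1 ≤ i ∧ i ≤ k ∧ 1 ≤ j ∧ j ≤ k ∧ p = (ε * 3 ^ i / 2, δ * 3 ^ j / 2)}

/-! ### Auxiliary development -/

def Dset (L m : ℕ) : Set (ℝ × ℝ) :=
  {p | ∃ (ε δ : ℝ) (a b : ℕ), (ε = 1 ∨ ε = -1) ∧ (δ = 1 ∨ δ = -1) ∧
    1 ≤ a ∧ a ≤ L ∧ 1 ≤ b ∧ b ≤ L ∧ (a = L → b ≤ m) ∧ (b = L → a ≤ m) ∧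
    p = (ε * 3 ^ a / 2, δ * 3 ^ b / 2)}

def Vset (L m : ℕ) : Set (ℝ × ℝ) :=
  {p | ∃ (ε δ : ℝ), (ε = 1 ∨ ε = -1) ∧ (δ = 1 ∨ δ = -1) ∧
    (p = (ε * 3 ^ L / 2, δ * 3 ^ m / 2) ∨ p = (ε * 3 ^ m / 2, δ * 3 ^ L / 2))}

lemma Mset_eq_Dset (k : ℕ) : Mset k = Dset k k := by
  ext p
  constructor
  · rintro ⟨ε, δ, a, b, hε, hδ, h1, h2, h3, h4, rfl⟩
    exact ⟨ε, δ, a, b, hε, hδ, h1, h2, h3, h4, fun _ => h4, fun _ => h2, rfl⟩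
  · rintro ⟨ε, δ, a, b, hε, hδ, h1, h2, h3, h4, _, _, rfl⟩
    exact ⟨ε, δ, a, b, hε, hδ, h1, h2, h3, h4, rfl⟩

lemma three_pow_le {a b : ℕ} (h : a ≤ b) : (3:ℝ) ^ a ≤ 3 ^ b :=
  pow_le_pow_right₀ (by norm_num) h

lemma three_pow_lt {a b : ℕ} (h : a < b) : (3:ℝ) ^ a < 3 ^ b :=
  pow_lt_pow_right₀ (by norm_num) h

lemma three_pow_succ_le {a L : ℕ} (h : a < L) : 3 * (3:ℝ) ^ a ≤ 3 ^ L := by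
  have := three_pow_le (Nat.succ_le_of_lt h)
  rwa [pow_succ, mul_comm] at this

lemma three_pow_inj {a b : ℕ} (h : (3:ℝ) ^ a = 3 ^ b) : a = b := by
  rcases lt_trichotomy a b with hab | hab | hab
  · exact absurd h (ne_of_lt (three_pow_lt hab))
  · exact hab
  · exact absurd h.symm (ne_of_lt (three_pow_lt hab))

lemma coord_inj {ε ε' : ℝ} {a b : ℕ} (hε : ε = 1 ∨ ε = -1) (hε' : ε' = 1 ∨ ε' = -1)
    (h : ε * 3 ^ a / 2 = ε' * 3 ^ b / 2) : ε = ε' ∧ a = b := by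
  have ha : (0:ℝ) < 3 ^ a := by positivity
  have hb : (0:ℝ) < 3 ^ b := by positivity
  rcases hε with rfl | rfl <;> rcases hε' with rfl | rfl
  · refine ⟨rfl, three_pow_inj ?_⟩; linarith
  · exfalso; nlinarith
  · exfalso; nlinarith
  · refine ⟨rfl, three_pow_inj ?_⟩; linarith

lemma Dset_zero (m : ℕ) : Dset 0 m = ∅ := by
  ext p
  simp only [Dset, Set.mem_setOf_eq, Set.mem_empty_iff_false, iff_false]
  rintro ⟨ε, δ, a, b, hε, hδ, h1, h2, _⟩
  omega

lemma Vset_ncard (L m : ℕ) : (Vset L m).ncard ≤ 8 := by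
  have hsub : Vset L m ⊆
      {((3:ℝ) ^ L / 2, (3:ℝ) ^ m / 2), ((3:ℝ) ^ L / 2, -(3:ℝ) ^ m / 2),
       (-(3:ℝ) ^ L / 2, (3:ℝ) ^ m / 2), (-(3:ℝ) ^ L / 2, -(3:ℝ) ^ m / 2),
       ((3:ℝ) ^ m / 2, (3:ℝ) ^ L / 2), ((3:ℝ) ^ m / 2, -(3:ℝ) ^ L / 2),
       (-(3:ℝ) ^ m / 2, (3:ℝ) ^ L / 2), (-(3:ℝ) ^ m / 2, -(3:ℝ) ^ L / 2)} := by
    rintro p ⟨ε, δ, hε, hδ, hp | hp⟩ <;> rcases hε with rfl | rfl <;> rcases hδ with rfl | rfl <;>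
      subst hp <;>
      simp only [one_mul, neg_one_mul, Set.mem_insert_iff, Set.mem_singleton_iff] <;> tauto
  calc (Vset L m).ncard ≤ _ := Set.ncard_le_ncard hsub (Set.toFinite _)
    _ ≤ 8 := by
      refine le_trans (Set.ncard_insert_le _ _) ?_
      refine le_trans (Nat.add_le_add_right (Set.ncard_insert_le _ _) 1) ?_
      refine le_trans (Nat.add_le_add_right (Nat.add_le_add_right (Set.ncard_insert_le _ _) 1) 1) ?_
      refine le_trans (Nat.add_le_add_right (Nat.add_le_add_right (Nat.add_le_add_right (Set.ncard_insert_le _ _) 1) 1) 1) ?_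
      refine le_trans (Nat.add_le_add_right (Nat.add_le_add_right (Nat.add_le_add_right (Nat.add_le_add_right (Set.ncard_insert_le _ _) 1) 1) 1) 1) ?_
      refine le_trans (Nat.add_le_add_right (Nat.add_le_add_right (Nat.add_le_add_right (Nat.add_le_add_right (Nat.add_le_add_right (Set.ncard_insert_le _ _) 1) 1) 1) 1) 1) ?_
      refine le_trans (Nat.add_le_add_right (Nat.add_le_add_right (Nat.add_le_add_right (Nat.add_le_add_right (Nat.add_le_add_right (Nat.add_le_add_right (Set.ncard_insert_le _ _) 1) 1) 1) 1) 1) 1) ?_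
      rw [Set.ncard_singleton]

lemma exposed_mem_extremePoints {D : Set (ℝ × ℝ)} {v : ℝ × ℝ} {c d : ℝ} (hv : v ∈ D)
    (h : ∀ y ∈ D, y ≠ v → c * y.1 + d * y.2 < c * v.1 + d * v.2) :
    v ∈ (convexHull ℝ D).extremePoints ℝ := by
  have hlin : IsLinearMap ℝ (fun p : ℝ × ℝ => c * p.1 + d * p.2) :=
    ⟨fun x y => by simp [Prod.fst_add, Prod.snd_add]; ring,
     fun t x => by simp [Prod.smul_fst, Prod.smul_snd, smul_eq_mul]; ring⟩
  set F : (ℝ × ℝ) →ₗ[ℝ] ℝ := IsLinearMap.mk' _ hlin with hF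
  have hFapp : ∀ p : ℝ × ℝ, F p = c * p.1 + d * p.2 := fun p => rfl
  have h' : ∀ y ∈ D, y ≠ v → F y < F v := by
    intro y hy hne; rw [hFapp, hFapp]; exact h y hy hne
  have hle : ∀ y ∈ D, F y ≤ F v := by
    intro y hy
    rcases eq_or_ne y v with rfl | hne
    · exact le_rfl
    · exact (h' y hy hne).le
  have hhull : convexHull ℝ D ⊆ {p | F p ≤ F v} :=
    convexHull_min hle (convex_halfSpace_le (F.isLinear) _)
  have huniq : ∀ w ∈ convexHull ℝ D, F w = F v → w = v := by
    intro w hw hfw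
    rw [convexHull_eq] at hw
    obtain ⟨ι, t, wt, z, hw0, hw1, hzD, hcm⟩ := hw
    have hcm' : ∑ i ∈ t, wt i • z i = w := by
      rw [← hcm, Finset.centerMass, hw1]; simp
    have hall : ∀ i ∈ t, wt i ≠ 0 → z i = v := by
      by_contra hcon
      push_neg at hcon
      obtain ⟨i0, hi0t, hi0w, hi0z⟩ := hcon
      have hwpos : 0 < wt i0 := lt_of_le_of_ne (hw0 i0 hi0t) (Ne.symm hi0w)
      have hstrict : ∑ i ∈ t, wt i * F (z i) < ∑ i ∈ t, wt i * F v := by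
        refine Finset.sum_lt_sum (fun i hi => mul_le_mul_of_nonneg_left (hle _ (hzD i hi)) (hw0 i hi)) ⟨i0, hi0t, ?_⟩
        exact mul_lt_mul_of_pos_left (h' (z i0) (hzD i0 hi0t) hi0z) hwpos
      have hfsum : F w = ∑ i ∈ t, wt i * F (z i) := by
        rw [← hcm', map_sum]
        exact Finset.sum_congr rfl fun i _ => by rw [map_smul, smul_eq_mul]
      rw [hfw] at hfsum
      rw [← Finset.sum_mul, hw1, one_mul] at hstrict
      linarith [hfsum ▸ hstrict]
    have hwv : w = ∑ i ∈ t, wt i • v := by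
      rw [← hcm']
      refine Finset.sum_congr rfl fun i hi => ?_
      rcases eq_or_ne (wt i) 0 with h0 | h0
      · simp [h0]
      · rw [hall i hi h0]
    rw [hwv, ← Finset.sum_smul, hw1, one_smul]
  refine ⟨subset_convexHull ℝ D hv, ?_⟩
  intro y hy z hz hseg
  obtain ⟨a, b, ha, hb, hab, habv⟩ := hseg
  have hya : F y ≤ F v := hhull hy
  have hzb : F z ≤ F v := hhull hz
  have hcomb : F v = a * F y + b * F z := by
    rw [← habv, map_add, map_smul, map_smul, smul_eq_mul, smul_eq_mul]
  have hfy : F y = F v := by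
    by_contra hne
    have h1 : a * F y < a * F v := mul_lt_mul_of_pos_left (lt_of_le_of_ne hya hne) ha
    have h2 : b * F z ≤ b * F v := mul_le_mul_of_nonneg_left hzb hb.le
    have h3 : a * F v + b * F v = F v := by rw [← add_mul, hab, one_mul]
    linarith
  have hfz : F z = F v := by
    by_contra hne
    have h1 : b * F z < b * F v := mul_lt_mul_of_pos_left (lt_of_le_of_ne hzb hne) hb
    have h2 : a * F y ≤ a * F v := mul_le_mul_of_nonneg_left hya ha.le
    have h3 : a * F v + b * F v = F v := by rw [← add_mul, hab, one_mul]
    linarith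
  exact huniq y hy hfy

lemma V_subset_extreme {L m : ℕ} (hm1 : 1 ≤ m) (hmL : m ≤ L) :
    Vset L m ⊆ (convexHull ℝ (Dset L m)).extremePoints ℝ := by
  rintro p ⟨ε, δ, hε, hδ, hp | hp⟩ <;> subst hp
  · -- vertex (ε 3^L/2, δ 3^m/2), functional (ε, δ/2)
    refine exposed_mem_extremePoints (c := ε) (d := δ/2)
      ⟨ε, δ, L, m, hε, hδ, by omega, le_rfl, hm1, hmL, fun _ => le_rfl, by omega, rfl⟩ ?_
    rintro y ⟨ε', δ', a, b, hε', hδ', h1a, h2a, h1b, h2b, hcL, hcL', rfl⟩ hne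
    simp only
    have Pa : (0:ℝ) < 3 ^ a := by positivity
    have Pb : (0:ℝ) < 3 ^ b := by positivity
    have PL : (0:ℝ) < 3 ^ L := by positivity
    have Pm : (0:ℝ) < 3 ^ m := by positivity
    have haL : (3:ℝ) ^ a ≤ 3 ^ L := three_pow_le h2a
    have hbL : (3:ℝ) ^ b ≤ 3 ^ L := three_pow_le h2b
    have e2 : ε * (ε * 3 ^ L / 2) + δ / 2 * (δ * 3 ^ m / 2) = 3 ^ L / 2 + 3 ^ m / 4 := by
      rcases hε with rfl | rfl <;> rcases hδ with rfl | rfl <;> ring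
    rw [e2]
    have hu : ε * ε' = 1 ∨ ε * ε' = -1 := by
      rcases hε with rfl | rfl <;> rcases hε' with rfl | rfl <;> norm_num
    have hw : δ * δ' = 1 ∨ δ * δ' = -1 := by
      rcases hδ with rfl | rfl <;> rcases hδ' with rfl | rfl <;> norm_num
    have e1 : ε * (ε' * 3 ^ a / 2) + δ / 2 * (δ' * 3 ^ b / 2)
        = (ε * ε') * 3 ^ a / 2 + (δ * δ') * 3 ^ b / 4 := by ring
    rw [e1]
    have hwb : (δ * δ') * 3 ^ b ≤ 3 ^ b := by
      rcases hw with h | h <;> rw [h] <;> linarith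
    rcases hu with hu | hu
    · rw [hu, one_mul]
      rcases lt_or_eq_of_le h2a with haL' | rfl
      · have h3a : 3 * (3:ℝ) ^ a ≤ 3 ^ L := three_pow_succ_le haL'
        linarith
      · have hbm : b ≤ m := hcL rfl
        have hbm3 : (3:ℝ) ^ b ≤ 3 ^ m := three_pow_le hbm
        rcases hw with hw | hw
        · have hee : ε' = ε := by
            rcases hε with rfl | rfl <;> rcases hε' with rfl | rfl <;> linarith
          have hdd : δ' = δ := by
            rcases hδ with rfl | rfl <;> rcases hδ' with rfl | rfl <;> linarith
          have hbm' : b ≠ m := by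
            rintro rfl
            exact hne (by rw [hee, hdd])
          have : (3:ℝ) ^ b < 3 ^ m := three_pow_lt (lt_of_le_of_ne hbm hbm')
          rw [hw, one_mul]
          linarith
        · rw [hw]; linarith
    · rw [hu]; linarith
  · -- vertex (ε 3^m/2, δ 3^L/2), functional (ε/2, δ)
    refine exposed_mem_extremePoints (c := ε/2) (d := δ)
      ⟨ε, δ, m, L, hε, hδ, hm1, hmL, by omega, le_rfl, by omega, fun _ => le_rfl, rfl⟩ ?_
    rintro y ⟨ε', δ', a, b, hε', hδ', h1a, h2a, h1b, h2b, hcL, hcL', rfl⟩ hne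
    simp only
    have Pa : (0:ℝ) < 3 ^ a := by positivity
    have Pb : (0:ℝ) < 3 ^ b := by positivity
    have PL : (0:ℝ) < 3 ^ L := by positivity
    have Pm : (0:ℝ) < 3 ^ m := by positivity
    have haL : (3:ℝ) ^ a ≤ 3 ^ L := three_pow_le h2a
    have hbL : (3:ℝ) ^ b ≤ 3 ^ L := three_pow_le h2b
    have e2 : ε / 2 * (ε * 3 ^ m / 2) + δ * (δ * 3 ^ L / 2) = 3 ^ m / 4 + 3 ^ L / 2 := by
      rcases hε with rfl | rfl <;> rcases hδ with rfl | rfl <;> ring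
    rw [e2]
    have hu : ε * ε' = 1 ∨ ε * ε' = -1 := by
      rcases hε with rfl | rfl <;> rcases hε' with rfl | rfl <;> norm_num
    have hw : δ * δ' = 1 ∨ δ * δ' = -1 := by
      rcases hδ with rfl | rfl <;> rcases hδ' with rfl | rfl <;> norm_num
    have e1 : ε / 2 * (ε' * 3 ^ a / 2) + δ * (δ' * 3 ^ b / 2)
        = (ε * ε') * 3 ^ a / 4 + (δ * δ') * 3 ^ b / 2 := by ring
    rw [e1]
    have hwa : (ε * ε') * 3 ^ a ≤ 3 ^ a := by
      rcases hu with h | h <;> rw [h] <;> linarith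
    rcases hw with hw | hw
    · rw [hw, one_mul]
      rcases lt_or_eq_of_le h2b with hbL' | rfl
      · have h3b : 3 * (3:ℝ) ^ b ≤ 3 ^ L := three_pow_succ_le hbL'
        linarith
      · have ham : a ≤ m := hcL' rfl
        have ham3 : (3:ℝ) ^ a ≤ 3 ^ m := three_pow_le ham
        rcases hu with hu | hu
        · have hee : ε' = ε := by
            rcases hε with rfl | rfl <;> rcases hε' with rfl | rfl <;> linarith
          have hdd : δ' = δ := by
            rcases hδ with rfl | rfl <;> rcases hδ' with rfl | rfl <;> linarith
          have ham' : a ≠ m := by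
            rintro rfl
            exact hne (by rw [hee, hdd])
          have : (3:ℝ) ^ a < 3 ^ m := three_pow_lt (lt_of_le_of_ne ham ham')
          rw [hu, one_mul]
          linarith
        · rw [hu]; linarith
    · rw [hw]; linarith
lemma extreme_subset_V {L m : ℕ} (hm1 : 1 ≤ m) (hmL : m ≤ L) :
    (convexHull ℝ (Dset L m)).extremePoints ℝ ⊆ Vset L m := by
  intro x hx
  have hxD : x ∈ Dset L m := extremePoints_convexHull_subset hx
  obtain ⟨ε, δ, a, b, hε, hδ, h1a, h2a, h1b, h2b, hcL, hcL', rfl⟩ := hxD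
  by_contra hxV
  rw [mem_extremePoints] at hx
  have hδn : -δ = 1 ∨ -δ = -1 := by rcases hδ with rfl | rfl <;> norm_num
  have hεn : -ε = 1 ∨ -ε = -1 := by rcases hε with rfl | rfl <;> norm_num
  have hε0 : ε ≠ 0 := by rcases hε with rfl | rfl <;> norm_num
  have hδ0 : δ ≠ 0 := by rcases hδ with rfl | rfl <;> norm_num
  have P3 : ∀ n : ℕ, (0:ℝ) < 3 ^ n := fun n => by positivity
  have seg : ∀ y z : ℝ × ℝ, y ∈ Dset L m → z ∈ Dset L m →
      (1/2 : ℝ) • y + (1/2 : ℝ) • z = (ε * 3 ^ a / 2, δ * 3 ^ b / 2) →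
      y ≠ (ε * 3 ^ a / 2, δ * 3 ^ b / 2) → False := by
    intro y z hy hz hmid hne
    exact hne (hx.2 y (subset_convexHull ℝ _ hy) z (subset_convexHull ℝ _ hz)
      ⟨1/2, 1/2, by norm_num, by norm_num, by norm_num, hmid⟩).1
  -- vertical move: replace b by b+1 / reflect
  have ymove : b + 1 ≤ L → (a = L → b + 1 ≤ m) → (b + 1 = L → a ≤ m) →
      (a = L → b ≤ m) → (b = L → a ≤ m) → False := by
    intro hy1 hy2 hy3 hz2 hz3
    refine seg (ε * 3 ^ a / 2, δ * 3 ^ (b+1) / 2) (ε * 3 ^ a / 2, -δ * 3 ^ b / 2)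
      ⟨ε, δ, a, b + 1, hε, hδ, h1a, h2a, by omega, hy1, hy2, hy3, rfl⟩
      ⟨ε, -δ, a, b, hε, hδn, h1a, h2a, h1b, h2b, hz2, hz3, rfl⟩ ?_ ?_
    · simp only [Prod.smul_mk, Prod.mk_add_mk, smul_eq_mul, Prod.mk.injEq, pow_succ]
      constructor <;> ring
    · intro h
      rw [Prod.mk.injEq] at h
      have h2 := h.2
      have h3 : (3:ℝ) ^ b < 3 ^ (b+1) := three_pow_lt (Nat.lt_succ_self b)
      rcases hδ with rfl | rfl <;> rw [div_eq_div_iff (by norm_num) (by norm_num)] at h2 <;>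
        nlinarith [P3 b, P3 (b+1)]
  -- horizontal move: replace a by a+1 / reflect
  have xmove : a + 1 ≤ L → (a + 1 = L → b ≤ m) → (b = L → a + 1 ≤ m) →
      (a = L → b ≤ m) → (b = L → a ≤ m) → False := by
    intro hy1 hy2 hy3 hz2 hz3
    refine seg (ε * 3 ^ (a+1) / 2, δ * 3 ^ b / 2) (-ε * 3 ^ a / 2, δ * 3 ^ b / 2)
      ⟨ε, δ, a + 1, b, hε, hδ, by omega, hy1, h1b, h2b, hy2, hy3, rfl⟩
      ⟨-ε, δ, a, b, hεn, hδ, h1a, h2a, h1b, h2b, hz2, hz3, rfl⟩ ?_ ?_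
    · simp only [Prod.smul_mk, Prod.mk_add_mk, smul_eq_mul, Prod.mk.injEq, pow_succ]
      constructor <;> ring
    · intro h
      rw [Prod.mk.injEq] at h
      have h2 := h.1
      have h3 : (3:ℝ) ^ a < 3 ^ (a+1) := three_pow_lt (Nat.lt_succ_self a)
      rcases hε with rfl | rfl <;> rw [div_eq_div_iff (by norm_num) (by norm_num)] at h2 <;>
        nlinarith [P3 a, P3 (a+1)]
  by_cases haL : a = L
  · -- top row: b < m
    have hbm : b ≤ m := hcL haL
    have hbne : b ≠ m := by
      rintro rfl
      exact hxV ⟨ε, δ, hε, hδ, Or.inl (by rw [haL])⟩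
    exact ymove (by omega) (by omega) (by omega) (by omega) (by omega)
  · by_cases hbL : b = L
    · have ham : a ≤ m := hcL' hbL
      have hane : a ≠ m := by
        rintro rfl
        exact hxV ⟨ε, δ, hε, hδ, Or.inr (by rw [hbL])⟩
      exact xmove (by omega) (by omega) (by omega) (by omega) (by omega)
    · by_cases hc1 : a + 1 < L ∨ (a + 1 = L ∧ b ≤ m)
      · exact xmove (by omega) (by omega) (by omega) (by omega) (by omega)
      · push_neg at hc1
        by_cases hc2 : b + 1 < L ∨ (b + 1 = L ∧ a ≤ m)
        · exact ymove (by omega) (by omega) (by omega) (by omega) (by omega)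
        · push_neg at hc2
          -- diagonal case: a = b = L - 1, m < a
          have haL1 : a + 1 = L := by omega
          have hbL1 : b + 1 = L := by omega
          have hma : m < a := by
            have := hc2.2 (by omega)
            omega
          obtain rfl : b = a := by omega
          have hmL' : m < L := by omega
          -- q = midpoint of the two vertices, o = 0
          set q : ℝ × ℝ := (ε * (3 ^ L + 3 ^ m) / 4, δ * (3 ^ L + 3 ^ m) / 4) with hq
          have hqmem : q ∈ convexHull ℝ (Dset L m) := by
            have hu : ((ε * 3 ^ L / 2, δ * 3 ^ m / 2) : ℝ × ℝ) ∈ Dset L m :=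
              ⟨ε, δ, L, m, hε, hδ, by omega, le_rfl, hm1, hmL, fun _ => le_rfl, by omega, rfl⟩
            have hw : ((ε * 3 ^ m / 2, δ * 3 ^ L / 2) : ℝ × ℝ) ∈ Dset L m :=
              ⟨ε, δ, m, L, hε, hδ, hm1, hmL, by omega, le_rfl, by omega, fun _ => le_rfl, rfl⟩
            have := (convex_convexHull ℝ (Dset L m)) (subset_convexHull ℝ _ hu)
              (subset_convexHull ℝ _ hw) (by norm_num : (0:ℝ) ≤ 1/2) (by norm_num : (0:ℝ) ≤ 1/2)
              (by norm_num)
            convert this using 1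
            simp only [Prod.smul_mk, Prod.mk_add_mk, smul_eq_mul, Prod.mk.injEq, hq]
            constructor <;> ring
          have h0mem : (0 : ℝ × ℝ) ∈ convexHull ℝ (Dset L m) := by
            have hu : ((1 * 3 ^ m / 2, 1 * 3 ^ m / 2) : ℝ × ℝ) ∈ Dset L m :=
              ⟨1, 1, m, m, Or.inl rfl, Or.inl rfl, hm1, by omega, hm1, by omega, by omega, by omega, rfl⟩
            have hw : ((-1 * 3 ^ m / 2, -1 * 3 ^ m / 2) : ℝ × ℝ) ∈ Dset L m :=
              ⟨-1, -1, m, m, Or.inr rfl, Or.inr rfl, hm1, by omega, hm1, by omega, by omega, by omega, rfl⟩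
            have := (convex_convexHull ℝ (Dset L m)) (subset_convexHull ℝ _ hu)
              (subset_convexHull ℝ _ hw) (by norm_num : (0:ℝ) ≤ 1/2) (by norm_num : (0:ℝ) ≤ 1/2)
              (by norm_num)
            convert this using 1
            simp only [Prod.smul_mk, Prod.mk_add_mk, smul_eq_mul, Prod.ext_iff,
              Prod.fst_zero, Prod.snd_zero]
            constructor <;> ring
          have hLa : (3:ℝ) ^ L = 3 * 3 ^ b := by
            rw [← hbL1, pow_succ, mul_comm]
          have hden : (0:ℝ) < 3 ^ L + 3 ^ m := by positivity
          set t : ℝ := 2 * 3 ^ b / (3 ^ L + 3 ^ m) with ht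
          have hma3 : (3:ℝ) ^ m < 3 ^ b := three_pow_lt hma
          have ht0 : 0 < t := by positivity
          have ht1 : t < 1 := by
            rw [ht, div_lt_one hden]
            nlinarith [P3 b, P3 m]
          have hseg : (ε * 3 ^ b / 2, δ * 3 ^ b / 2) ∈ openSegment ℝ q (0 : ℝ × ℝ) := by
            refine ⟨t, 1 - t, ht0, by linarith, by ring, ?_⟩
            simp only [Prod.smul_mk, Prod.mk_add_mk, smul_eq_mul, Prod.mk.injEq, hq, ht,
              Prod.fst_zero, Prod.snd_zero, smul_zero, add_zero, mul_zero]
            constructor <;> (field_simp; ring)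
          have hqx := (hx.2 q hqmem 0 h0mem hseg).1
          rw [hq, Prod.mk.injEq] at hqx
          have h1 := hqx.1
          rcases hε with rfl | rfl <;>
            rw [div_eq_div_iff (by norm_num) (by norm_num)] at h1 <;>
            nlinarith [P3 b, P3 m]
lemma extremePoints_Dset {L m : ℕ} (hm1 : 1 ≤ m) (hmL : m ≤ L) :
    (convexHull ℝ (Dset L m)).extremePoints ℝ = Vset L m :=
  subset_antisymm (extreme_subset_V hm1 hmL) (V_subset_extreme hm1 hmL)

lemma peel_Dset {L m : ℕ} (hm2 : 2 ≤ m) (hmL : m ≤ L) :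
    peel (Dset L m) = Dset L (m - 1) := by
  unfold peel
  rw [extremePoints_Dset (by omega) hmL]
  ext p
  constructor
  · rintro ⟨⟨ε, δ, a, b, hε, hδ, h1a, h2a, h1b, h2b, hcL, hcL', rfl⟩, hpV⟩
    refine ⟨ε, δ, a, b, hε, hδ, h1a, h2a, h1b, h2b, ?_, ?_, rfl⟩
    · intro haL
      have hb := hcL haL
      have hbm : b ≠ m := by
        rintro rfl
        exact hpV ⟨ε, δ, hε, hδ, Or.inl (by rw [haL])⟩
      omega
    · intro hbL
      have ha := hcL' hbL
      have ham : a ≠ m := by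
        rintro rfl
        exact hpV ⟨ε, δ, hε, hδ, Or.inr (by rw [hbL])⟩
      omega
  · rintro ⟨ε, δ, a, b, hε, hδ, h1a, h2a, h1b, h2b, hcL, hcL', rfl⟩
    refine ⟨⟨ε, δ, a, b, hε, hδ, h1a, h2a, h1b, h2b, by omega, by omega, rfl⟩, ?_⟩
    rintro ⟨ε', δ', hε', hδ', h | h⟩ <;> rw [Prod.mk.injEq] at h
    · obtain ⟨-, ha⟩ := coord_inj hε hε' h.1
      obtain ⟨-, hb⟩ := coord_inj hδ hδ' h.2
      have := hcL ha
      omega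
    · obtain ⟨-, ha⟩ := coord_inj hε hε' h.1
      obtain ⟨-, hb⟩ := coord_inj hδ hδ' h.2
      have := hcL' hb
      omega

lemma peel_Dset_one {L : ℕ} (h1L : 1 ≤ L) :
    peel (Dset L 1) = Dset (L - 1) (L - 1) := by
  unfold peel
  rw [extremePoints_Dset le_rfl h1L]
  ext p
  constructor
  · rintro ⟨⟨ε, δ, a, b, hε, hδ, h1a, h2a, h1b, h2b, hcL, hcL', rfl⟩, hpV⟩
    have haL : a ≠ L := by
      intro haL
      have hb1 : b = 1 := by have := hcL haL; omega
      exact hpV ⟨ε, δ, hε, hδ, Or.inl (by rw [haL, hb1])⟩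
    have hbL : b ≠ L := by
      intro hbL
      have ha1 : a = 1 := by have := hcL' hbL; omega
      exact hpV ⟨ε, δ, hε, hδ, Or.inr (by rw [hbL, ha1])⟩
    exact ⟨ε, δ, a, b, hε, hδ, h1a, by omega, h1b, by omega, by omega, by omega, rfl⟩
  · rintro ⟨ε, δ, a, b, hε, hδ, h1a, h2a, h1b, h2b, hcL, hcL', rfl⟩
    have haL : a < L := by omega
    have hbL : b < L := by omega
    refine ⟨⟨ε, δ, a, b, hε, hδ, h1a, by omega, h1b, by omega, by omega, by omega, rfl⟩, ?_⟩
    rintro ⟨ε', δ', hε', hδ', h | h⟩ <;> rw [Prod.mk.injEq] at h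
    · obtain ⟨-, ha⟩ := coord_inj hε hε' h.1
      omega
    · obtain ⟨-, hb⟩ := coord_inj hδ hδ' h.2
      omega

/-- Every convex layer of the peeling process on `M_k` has at most 8 points. -/
theorem layer_card_le_eight (k : ℕ) (hk : 0 < k) (i : ℕ) :
    ((convexHull ℝ (peel^[i] (Mset k))).extremePoints ℝ).ncard ≤ 8 := by
  have key : ∀ i : ℕ, (∃ L m : ℕ, 1 ≤ m ∧ m ≤ L ∧ peel^[i] (Mset k) = Dset L m) ∨
      peel^[i] (Mset k) = ∅ := by
    intro i
    induction i with
    | zero => exact Or.inl ⟨k, k, hk, le_rfl, by simpa using Mset_eq_Dset k⟩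
    | succ n ih =>
      rw [Function.iterate_succ_apply']
      rcases ih with ⟨L, m, hm1, hmL, hD⟩ | hE
      · rw [hD]
        by_cases hm : 2 ≤ m
        · exact Or.inl ⟨L, m - 1, by omega, by omega, peel_Dset hm hmL⟩
        · have hm1' : m = 1 := by omega
          subst hm1'
          by_cases hL : 2 ≤ L
          · exact Or.inl ⟨L - 1, L - 1, by omega, le_rfl, peel_Dset_one (by omega)⟩
          · have hL1 : L = 1 := by omega
            subst hL1
            right
            rw [peel_Dset_one le_rfl]
            exact Dset_zero 0
      · rw [hE]
        right
        simp [peel]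
  rcases key i with ⟨L, m, hm1, hmL, hD⟩ | hE
  · rw [hD, extremePoints_Dset hm1 hmL]
    exact Vset_ncard L m
  · rw [hE, convexHull_empty, extremePoints_empty, Set.ncard_empty]
    omega
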